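/- arXiv:1806.07335 — 2 statements merged into one kernel-verified Lean document; each statement's English description precedes it below -/
import Mathlib

section
/- There exist δ* > 0 and a pair of smooth functions (Γ₁, Γ₂) : [0, δ*] × ℝ → ℝ² such that Γᵢ(s, t + 2π) = Γᵢ(s, t) for all (s, t) and i = 1, 2, the identity (1 + ∂ₜΓ₁(s,t))² + (∂ₜΓ₂(s,t))² = 1 + s² holds for all (s, t), and for every integer k ≥ 0 there is a constant C(k) such that |∂ₛ∂ₜᵏΓ₁(s,t)| + |∂ₜᵏΓ₁(s,t)| + |∂ₜᵏΓ₂(s,t)| ≤ C(k) s for all (s, t) ∈ [0, δ*] × ℝ. -/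
open scoped ContDiff
open Set

noncomputable section

open Real


-- partial derivative machinery
def pT (F : ℝ × ℝ → ℝ) : ℝ × ℝ → ℝ := fun p => fderiv ℝ F p (0,1)
def pS (F : ℝ × ℝ → ℝ) : ℝ × ℝ → ℝ := fun p => fderiv ℝ F p (1,0)

lemma infty_add_one : (∞ : WithTop ℕ∞) + 1 ≤ ∞ := by
  exact_mod_cast le_refl _

lemma contDiff_pT {F : ℝ × ℝ → ℝ} (hF : ContDiff ℝ ∞ F) : ContDiff ℝ ∞ (pT F) :=
  (hF.fderiv_right infty_add_one).clm_apply contDiff_const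

lemma contDiff_pS {F : ℝ × ℝ → ℝ} (hF : ContDiff ℝ ∞ F) : ContDiff ℝ ∞ (pS F) :=
  (hF.fderiv_right infty_add_one).clm_apply contDiff_const

lemma hasDerivAt_pT {F : ℝ × ℝ → ℝ} (hF : ContDiff ℝ ∞ F) (s t : ℝ) :
    HasDerivAt (fun t' => F (s, t')) (pT F (s,t)) t := by
  have h1 : HasFDerivAt F (fderiv ℝ F (s,t)) (s,t) :=
    (hF.differentiable (by simp) (s,t)).hasFDerivAt
  have h2 : HasDerivAt (fun t' : ℝ => ((s, t') : ℝ × ℝ)) ((0 : ℝ), (1 : ℝ)) t :=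
    HasDerivAt.prodMk (hasDerivAt_const t s) (hasDerivAt_id t)
  exact h1.comp_hasDerivAt t h2

lemma hasDerivAt_pS {F : ℝ × ℝ → ℝ} (hF : ContDiff ℝ ∞ F) (s t : ℝ) :
    HasDerivAt (fun s' => F (s', t)) (pS F (s,t)) s := by
  have h1 : HasFDerivAt F (fderiv ℝ F (s,t)) (s,t) :=
    (hF.differentiable (by simp) (s,t)).hasFDerivAt
  have h2 : HasDerivAt (fun s' : ℝ => ((s', t) : ℝ × ℝ)) ((1 : ℝ), (0 : ℝ)) s :=
    HasDerivAt.prodMk (hasDerivAt_id s) (hasDerivAt_const s t)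
  exact h1.comp_hasDerivAt s h2

lemma contDiff_pT_iter {F : ℝ × ℝ → ℝ} (hF : ContDiff ℝ ∞ F) (k : ℕ) :
    ContDiff ℝ ∞ (pT^[k] F) := by
  induction k generalizing F with
  | zero => exact hF
  | succ k ih =>
    rw [Function.iterate_succ_apply]
    exact ih (contDiff_pT hF)

lemma iteratedDeriv_eq_pT_iter {F : ℝ × ℝ → ℝ} (hF : ContDiff ℝ ∞ F) (k : ℕ) (s t : ℝ) :
    iteratedDeriv k (fun t' => F (s, t')) t = (pT^[k] F) (s, t) := by
  induction k generalizing F with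
  | zero => simp [iteratedDeriv_zero]
  | succ k ih =>
    rw [iteratedDeriv_succ']
    have hd : deriv (fun t' => F (s, t')) = fun t' => pT F (s, t') :=
      funext fun t' => (hasDerivAt_pT hF s t').deriv
    rw [hd, ih (contDiff_pT hF), Function.iterate_succ_apply]

lemma periodic_deriv {f : ℝ → ℝ} (c : ℝ) (h : Function.Periodic f c) :
    Function.Periodic (deriv f) c := by
  intro t
  have h1 : (fun x => f (x + c)) = f := funext fun x => h x
  calc deriv f (t + c) = deriv (fun x => f (x + c)) t := (deriv_comp_add_const f c t).symm
    _ = deriv f t := by rw [h1]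

lemma periodic_pT_iter {F : ℝ × ℝ → ℝ} (hF : ContDiff ℝ ∞ F) (c : ℝ) (k : ℕ)
    (hper : ∀ s, Function.Periodic (fun t => F (s, t)) c) :
    ∀ s, Function.Periodic (fun t => (pT^[k] F) (s, t)) c := by
  induction k generalizing F with
  | zero => exact hper
  | succ k ih =>
    rw [Function.iterate_succ_apply]
    refine ih (contDiff_pT hF) (fun s t => ?_)
    have h1 : pT F (s, t + c) = deriv (fun t' => F (s, t')) (t + c) :=
      ((hasDerivAt_pT hF s (t + c)).deriv).symm
    have h2 : pT F (s, t) = deriv (fun t' => F (s, t')) t :=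
      ((hasDerivAt_pT hF s t).deriv).symm
    simp only [h1, h2]
    exact periodic_deriv c (hper s) t

/-- Key bound: smooth, `2π`-periodic in `t`, vanishing at `s = 0` implies `≤ C s`. -/
lemma bound_of_vanishing {F : ℝ × ℝ → ℝ} (hF : ContDiff ℝ ∞ F) {δ : ℝ} (hδ : 0 < δ)
    (hper : ∀ s, Function.Periodic (fun t => F (s, t)) (2 * π))
    (h0 : ∀ t, F (0, t) = 0) :
    ∃ C : ℝ, 0 < C ∧ ∀ s ∈ Icc (0:ℝ) δ, ∀ t : ℝ, |F (s, t)| ≤ C * s := by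
  have h2π : (0:ℝ) < 2 * π := by positivity
  have hK : IsCompact (Icc (0:ℝ) δ ×ˢ Icc (0:ℝ) (2 * π)) :=
    isCompact_Icc.prod isCompact_Icc
  obtain ⟨M, hM⟩ := hK.exists_bound_of_continuousOn ((contDiff_pS hF).continuous.continuousOn)
  refine ⟨max M 0 + 1, by positivity, ?_⟩
  rintro s ⟨hs0, hsδ⟩ t
  -- reduce t to [0, 2π)
  set t₀ : ℝ := t - ⌊t / (2 * π)⌋ * (2 * π) with ht₀
  have ht₀mem : t₀ ∈ Icc (0:ℝ) (2 * π) :=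
    ⟨Int.sub_floor_div_mul_nonneg t h2π, le_of_lt (Int.sub_floor_div_mul_lt t h2π)⟩
  have hred : ∀ s', F (s', t) = F (s', t₀) := fun s' =>
    ((hper s').sub_int_mul_eq (⌊t / (2 * π)⌋)).symm
  -- mean value on [0, s]
  have key : ∀ x ∈ Icc (0:ℝ) s, ‖F (x, t₀) - F (0, t₀)‖ ≤ (max M 0 + 1) * (x - 0) := by
    apply norm_image_sub_le_of_norm_deriv_le_segment'
      (f' := fun x => pS F (x, t₀))
    · intro x hx
      exact (hasDerivAt_pS hF x t₀).hasDerivWithinAt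
    · intro x hx
      have hxmem : (x, t₀) ∈ Icc (0:ℝ) δ ×ˢ Icc (0:ℝ) (2 * π) :=
        ⟨⟨hx.1, le_trans (le_of_lt hx.2) hsδ⟩, ht₀mem⟩
      calc ‖pS F (x, t₀)‖ ≤ M := hM _ hxmem
        _ ≤ max M 0 + 1 := le_trans (le_max_left _ _) (by linarith)
  have := key s ⟨hs0, le_refl s⟩
  rw [h0 t₀, sub_zero, sub_zero] at this
  rw [hred s]
  exact_mod_cast this

lemma iteratedDeriv_cmul {n : ℕ} {f : ℝ → ℝ} (hf : ContDiff ℝ n f) (c : ℝ) (x : ℝ) :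
    iteratedDeriv n (fun z => c * f z) x = c * iteratedDeriv n f x := by
  rw [← iteratedDerivWithin_univ, ← iteratedDerivWithin_univ]
  exact iteratedDerivWithin_const_mul (mem_univ x) uniqueDiffOn_univ c hf.contDiffWithinAt

lemma iteratedDeriv_zero_fun (k : ℕ) : iteratedDeriv k (fun _ : ℝ => (0:ℝ)) = fun _ => 0 := by
  induction k with
  | zero => simp [iteratedDeriv_zero]
  | succ k ih =>
    rw [iteratedDeriv_succ']
    have : deriv (fun _ : ℝ => (0:ℝ)) = fun _ => (0:ℝ) := funext fun x => deriv_const x 0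
    rw [this, ih]

-- the concrete corrugation
def uu (s : ℝ) : ℝ := Real.sqrt (1 + s^2)
def ww (s : ℝ) : ℝ := s / Real.sqrt (uu s + 1)
def AA (x : ℝ) : ℝ := x * Real.sqrt (1 + x^2) + Real.arsinh x
def G1 (s t : ℝ) : ℝ := (uu s - 1) * (Real.sin (2*t) / 2)
def G2 (s t : ℝ) : ℝ := AA (ww s) - AA (ww s * Real.cos t)

lemma uu_nonneg (s : ℝ) : 0 ≤ uu s := Real.sqrt_nonneg _
lemma uu_sq (s : ℝ) : uu s ^ 2 = 1 + s^2 := Real.sq_sqrt (by positivity)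
lemma huu1 (s : ℝ) : 0 < uu s + 1 := by have := uu_nonneg s; linarith
lemma ww_sq (s : ℝ) : ww s ^ 2 = uu s - 1 := by
  have h1 := huu1 s
  have h2 : Real.sqrt (uu s + 1) ^ 2 = uu s + 1 := Real.sq_sqrt h1.le
  have h3 : Real.sqrt (uu s + 1) ≠ 0 := by
    have := Real.sqrt_pos.mpr h1; linarith
  rw [ww, div_pow, h2, div_eq_iff h1.ne']
  have := uu_sq s
  nlinarith
lemma uu_zero : uu 0 = 1 := by simp [uu]
lemma ww_zero : ww 0 = 0 := by simp [ww]

lemma contDiff_uu : ContDiff ℝ ∞ uu :=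
  (contDiff_const.add (contDiff_id.pow 2)).sqrt (fun x => by positivity)

lemma contDiff_ww : ContDiff ℝ ∞ ww := by
  refine contDiff_id.div ((contDiff_uu.add contDiff_const).sqrt ?_) ?_
  · intro x; have := huu1 x; positivity
  · intro x
    have := Real.sqrt_pos.mpr (huu1 x); exact this.ne'

lemma contDiff_AA : ContDiff ℝ ∞ AA :=
  (contDiff_id.mul ((contDiff_const.add (contDiff_id.pow 2)).sqrt
    (fun x => by positivity))).add (Real.contDiff_arsinh (n := ∞))

lemma hasDerivAt_AA (x : ℝ) : HasDerivAt AA (2 * Real.sqrt (1 + x^2)) x := by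
  have hx : (0:ℝ) < 1 + x^2 := by positivity
  have hq : Real.sqrt (1+x^2)^2 = 1+x^2 := Real.sq_sqrt hx.le
  have hq0 : Real.sqrt (1+x^2) ≠ 0 := by
    have := Real.sqrt_pos.mpr hx; linarith
  have h1 : HasDerivAt (fun y : ℝ => 1 + y^2) (2*x) x := by
    simpa using ((hasDerivAt_pow 2 x).const_add 1)
  have h2 : HasDerivAt (fun y : ℝ => Real.sqrt (1 + y^2)) (1/(2*Real.sqrt (1+x^2)) * (2*x)) x :=
    (Real.hasDerivAt_sqrt hx.ne').comp x h1
  have h3 : HasDerivAt (fun y : ℝ => y * Real.sqrt (1+y^2))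
      (1 * Real.sqrt (1+x^2) + x * (1/(2*Real.sqrt (1+x^2)) * (2*x))) x :=
    (hasDerivAt_id x).mul h2
  have h4 : HasDerivAt AA
      (1 * Real.sqrt (1+x^2) + x * (1/(2*Real.sqrt (1+x^2)) * (2*x)) + (Real.sqrt (1 + x ^ 2))⁻¹) x :=
    h3.add (Real.hasDerivAt_arsinh x)
  convert h4 using 1
  field_simp
  linear_combination hq

lemma hasDerivAt_uu (s : ℝ) : HasDerivAt uu (s / uu s) s := by
  have hx : (0:ℝ) < 1 + s^2 := by positivity
  have h1 : HasDerivAt (fun y : ℝ => 1 + y^2) (2*s) s := by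
    simpa using ((hasDerivAt_pow 2 s).const_add 1)
  have h2 : HasDerivAt (fun y : ℝ => Real.sqrt (1 + y^2)) (1/(2*Real.sqrt (1+s^2)) * (2*s)) s :=
    (Real.hasDerivAt_sqrt hx.ne').comp s h1
  convert h2 using 1
  · rfl
  have hq0 : Real.sqrt (1+s^2) ≠ 0 := by
    have := Real.sqrt_pos.mpr hx; linarith
  rw [uu]
  field_simp

lemma hasDerivAt_G1t (s t : ℝ) :
    HasDerivAt (fun t' => G1 s t') ((uu s - 1) * Real.cos (2*t)) t := by
  have hinner : HasDerivAt (fun t' : ℝ => 2*t') 2 t := by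
    simpa using (hasDerivAt_id t).const_mul 2
  have h : HasDerivAt (fun t' : ℝ => Real.sin (2*t')) (Real.cos (2*t) * 2) t :=
    (Real.hasDerivAt_sin (2*t)).comp t hinner
  have h2 : HasDerivAt (fun t' => G1 s t') ((uu s - 1) * (Real.cos (2*t) * 2 / 2)) t :=
    (h.div_const 2).const_mul (uu s - 1)
  convert h2 using 1
  ring

lemma hasDerivAt_G2t (s t : ℝ) :
    HasDerivAt (fun t' => G2 s t')
      (2 * Real.sqrt (1 + (ww s * Real.cos t)^2) * (ww s * Real.sin t)) t := by
  have hc : HasDerivAt (fun t' : ℝ => ww s * Real.cos t') (ww s * -Real.sin t) t :=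
    (Real.hasDerivAt_cos t).const_mul (ww s)
  have h2 : HasDerivAt (fun t' => AA (ww s * Real.cos t'))
      (2 * Real.sqrt (1 + (ww s * Real.cos t)^2) * (ww s * -Real.sin t)) t :=
    (hasDerivAt_AA _).comp t hc
  have h3 : HasDerivAt (fun t' => G2 s t')
      (0 - 2 * Real.sqrt (1 + (ww s * Real.cos t)^2) * (ww s * -Real.sin t)) t := by
    have := (hasDerivAt_const t (AA (ww s))).sub h2
    simpa [G2, mul_assoc, Pi.sub_def] using this
  convert h3 using 1
  ring

lemma pde (s t : ℝ) :
    (1 + deriv (G1 s) t)^2 + (deriv (G2 s) t)^2 = 1 + s^2 := by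
  have h1 : deriv (G1 s) t = (uu s - 1) * Real.cos (2*t) := (hasDerivAt_G1t s t).deriv
  have h2 : deriv (G2 s) t = 2 * Real.sqrt (1 + (ww s * Real.cos t)^2) * (ww s * Real.sin t) :=
    (hasDerivAt_G2t s t).deriv
  have hq : Real.sqrt (1 + (ww s * Real.cos t)^2)^2 = 1 + (ww s * Real.cos t)^2 :=
    Real.sq_sqrt (by positivity)
  have hw : ww s ^ 2 = uu s - 1 := ww_sq s
  have hu : uu s ^ 2 = 1 + s^2 := uu_sq s
  have hst : Real.sin t ^ 2 = 1 - Real.cos t ^ 2 := Real.sin_sq t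
  rw [h1, h2, Real.cos_two_mul]
  linear_combination (4*(ww s)^2*(Real.sin t)^2)*hq
    + (4*(ww s)^2 + 4*(ww s)^4*(Real.cos t)^2)*hst
    + (4*(1-(Real.cos t)^2) + 4*(Real.cos t)^2*(1-(Real.cos t)^2)*((ww s)^2+(uu s -1)))*hw + hu

lemma per_G1 (s : ℝ) : Function.Periodic (fun t => G1 s t) (2*π) := by
  intro t
  have : Real.sin (2*(t+2*π)) = Real.sin (2*t) := by
    rw [show 2*(t+2*π) = (2*t + 2*π) + 2*π by ring, Real.sin_add_two_pi, Real.sin_add_two_pi]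
  simp only [G1, this]

lemma per_G2 (s : ℝ) : Function.Periodic (fun t => G2 s t) (2*π) := by
  intro t
  simp only [G2, Real.cos_add_two_pi]

lemma G1_zero (t : ℝ) : G1 0 t = 0 := by simp [G1, uu_zero]
lemma G2_zero (t : ℝ) : G2 0 t = 0 := by simp [G2, ww_zero]

lemma contDiff_F1 : ContDiff ℝ ∞ (fun p : ℝ × ℝ => G1 p.1 p.2) := by
  unfold G1
  exact ((contDiff_uu.comp contDiff_fst).sub contDiff_const).mul
    (((Real.contDiff_sin (n := (⊤:ℕ∞))).comp (contDiff_const.mul contDiff_snd)).div_const 2)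

lemma contDiff_F2 : ContDiff ℝ ∞ (fun p : ℝ × ℝ => G2 p.1 p.2) := by
  unfold G2
  exact (contDiff_AA.comp (contDiff_ww.comp contDiff_fst)).sub
    (contDiff_AA.comp ((contDiff_ww.comp contDiff_fst).mul
      ((Real.contDiff_cos (n := (⊤:ℕ∞))).comp contDiff_snd)))

lemma per_pS {F : ℝ × ℝ → ℝ} (hF : ContDiff ℝ ∞ F) {c : ℝ}
    (hper : ∀ s, Function.Periodic (fun t => F (s,t)) c) :
    ∀ s, Function.Periodic (fun t => pS F (s,t)) c := by
  intro s t
  have h1 : pS F (s, t+c) = deriv (fun s' => F (s', t+c)) s :=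
    ((hasDerivAt_pS hF s (t+c)).deriv).symm
  have h2 : pS F (s, t) = deriv (fun s' => F (s', t)) s :=
    ((hasDerivAt_pS hF s t).deriv).symm
  simp only [h1, h2]
  congr 1
  funext s'
  exact hper s' t

/-- **Corrugation profile (Lemma 2.3).** There are `δ* > 0` and smooth functions
`Γ₁, Γ₂` on `[0, δ*] × ℝ`, `2π`-periodic in `t`, with
`(1 + ∂ₜΓ₁)² + (∂ₜΓ₂)² = 1 + s²` and `|∂ₛ∂ₜᵏΓ₁| + |∂ₜᵏΓ₁| + |∂ₜᵏΓ₂| ≤ C(k) s`. -/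
theorem corrugation_profile :
    ∃ δs : ℝ, 0 < δs ∧ ∃ Γ₁ Γ₂ : ℝ → ℝ → ℝ,
      ContDiff ℝ ∞ (Function.uncurry Γ₁) ∧ ContDiff ℝ ∞ (Function.uncurry Γ₂) ∧
      (∀ s ∈ Icc (0 : ℝ) δs, ∀ t : ℝ,
        Γ₁ s (t + 2 * Real.pi) = Γ₁ s t ∧ Γ₂ s (t + 2 * Real.pi) = Γ₂ s t) ∧
      (∀ s ∈ Icc (0 : ℝ) δs, ∀ t : ℝ,
        (1 + deriv (Γ₁ s) t) ^ 2 + (deriv (Γ₂ s) t) ^ 2 = 1 + s ^ 2) ∧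
      ∀ k : ℕ, ∃ C : ℝ, 0 < C ∧ ∀ s ∈ Icc (0 : ℝ) δs, ∀ t : ℝ,
        |deriv (fun s' => iteratedDeriv k (fun t' => Γ₁ s' t') t) s| +
          |iteratedDeriv k (fun t' => Γ₁ s t') t| +
          |iteratedDeriv k (fun t' => Γ₂ s t') t| ≤ C * s := by
  refine ⟨1, one_pos, G1, G2, contDiff_F1, contDiff_F2, ?_, ?_, ?_⟩
  · intro s _ t; exact ⟨per_G1 s t, per_G2 s t⟩
  · intro s _ t; exact pde s t
  intro k
  have hF1 : ContDiff ℝ ∞ (fun p : ℝ × ℝ => G1 p.1 p.2) := contDiff_F1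
  have hF2 : ContDiff ℝ ∞ (fun p : ℝ × ℝ => G2 p.1 p.2) := contDiff_F2
  have hGk1 : ContDiff ℝ ∞ (pT^[k] (fun p : ℝ × ℝ => G1 p.1 p.2)) := contDiff_pT_iter hF1 k
  have hGk2 : ContDiff ℝ ∞ (pT^[k] (fun p : ℝ × ℝ => G2 p.1 p.2)) := contDiff_pT_iter hF2 k
  have hper1 := periodic_pT_iter hF1 (2*π) k per_G1
  have hper2 := periodic_pT_iter hF2 (2*π) k per_G2
  have hz1 : ∀ t, (pT^[k] (fun p : ℝ × ℝ => G1 p.1 p.2)) (0, t) = 0 := by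
    intro t
    rw [← iteratedDeriv_eq_pT_iter hF1 k 0 t]
    have h : (fun t' => G1 0 t') = fun _ : ℝ => (0:ℝ) := funext fun t' => G1_zero t'
    rw [show (fun t' => (fun p : ℝ × ℝ => G1 p.1 p.2) (0, t')) = fun _ : ℝ => (0:ℝ) from h,
      iteratedDeriv_zero_fun]
  have hz2 : ∀ t, (pT^[k] (fun p : ℝ × ℝ => G2 p.1 p.2)) (0, t) = 0 := by
    intro t
    rw [← iteratedDeriv_eq_pT_iter hF2 k 0 t]
    have h : (fun t' => G2 0 t') = fun _ : ℝ => (0:ℝ) := funext fun t' => G2_zero t'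
    rw [show (fun t' => (fun p : ℝ × ℝ => G2 p.1 p.2) (0, t')) = fun _ : ℝ => (0:ℝ) from h,
      iteratedDeriv_zero_fun]
  obtain ⟨C1, hC1, hB1⟩ := bound_of_vanishing hGk1 one_pos hper1 hz1
  obtain ⟨C2, hC2, hB2⟩ := bound_of_vanishing hGk2 one_pos hper2 hz2
  -- mixed derivative term
  have hE : ContDiff ℝ ∞ (pS (pT^[k] (fun p : ℝ × ℝ => G1 p.1 p.2))) := contDiff_pS hGk1
  have hperE := per_pS hGk1 hper1
  have hψk : ContDiff ℝ (k : ℕ) (fun t' : ℝ => Real.sin (2*t') / 2) := by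
    have h : ContDiff ℝ ∞ (fun t' : ℝ => Real.sin (2*t') / 2) :=
      ((Real.contDiff_sin (n := (⊤:ℕ∞))).comp (contDiff_const.mul contDiff_id)).div_const 2
    exact h.of_le (by exact_mod_cast le_top)
  have hzE : ∀ t, pS (pT^[k] (fun p : ℝ × ℝ => G1 p.1 p.2)) (0, t) = 0 := by
    intro t
    have hfact : ∀ s' : ℝ, (pT^[k] (fun p : ℝ × ℝ => G1 p.1 p.2)) (s', t)
        = (uu s' - 1) * iteratedDeriv k (fun t' : ℝ => Real.sin (2*t') / 2) t := by
      intro s'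
      rw [← iteratedDeriv_eq_pT_iter hF1 k s' t]
      exact iteratedDeriv_cmul hψk (uu s' - 1) t
    have h1 : pS (pT^[k] (fun p : ℝ × ℝ => G1 p.1 p.2)) (0, t)
        = deriv (fun s' => (pT^[k] (fun p : ℝ × ℝ => G1 p.1 p.2)) (s', t)) 0 :=
      ((hasDerivAt_pS hGk1 0 t).deriv).symm
    rw [h1, funext hfact]
    have h3 : HasDerivAt
        (fun s' => (uu s' - 1) * iteratedDeriv k (fun t' : ℝ => Real.sin (2*t') / 2) t)
        ((0 / uu 0) * iteratedDeriv k (fun t' : ℝ => Real.sin (2*t') / 2) t) 0 :=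
      ((hasDerivAt_uu 0).sub_const 1).mul_const _
    rw [h3.deriv]
    simp
  obtain ⟨C0, hC0, hB0⟩ := bound_of_vanishing hE one_pos hperE hzE
  refine ⟨C0 + C1 + C2, by positivity, ?_⟩
  intro s hs t
  have e2 : iteratedDeriv k (fun t' => G1 s t') t
      = (pT^[k] (fun p : ℝ × ℝ => G1 p.1 p.2)) (s, t) := iteratedDeriv_eq_pT_iter hF1 k s t
  have e3 : iteratedDeriv k (fun t' => G2 s t') t
      = (pT^[k] (fun p : ℝ × ℝ => G2 p.1 p.2)) (s, t) := iteratedDeriv_eq_pT_iter hF2 k s t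
  have e1 : deriv (fun s' => iteratedDeriv k (fun t' => G1 s' t') t) s
      = pS (pT^[k] (fun p : ℝ × ℝ => G1 p.1 p.2)) (s, t) := by
    have hfn : (fun s' => iteratedDeriv k (fun t' => G1 s' t') t)
        = fun s' => (pT^[k] (fun p : ℝ × ℝ => G1 p.1 p.2)) (s', t) :=
      funext fun s' => iteratedDeriv_eq_pT_iter hF1 k s' t
    rw [hfn]
    exact (hasDerivAt_pS hGk1 s t).deriv
  rw [e1, e2, e3]
  have b0 := hB0 s hs t
  have b1 := hB1 s hs t
  have b2 := hB2 s hs t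
  have hdist : (C0 + C1 + C2) * s = C0 * s + C1 * s + C2 * s := by ring
  linarith
end
end

section
/- [Algebraic corrugation identity] Let n ≥ 1, B a real (n+1)×n matrix, ν ∈ ℝⁿ, κ > 0, and ξ, ζ ∈ ℝ^{n+1} satisfy Bᵀξ = κ ν, Bᵀζ = 0, |ξ|² = |ζ|² = κ, and ξ · ζ = 0. Then for any real numbers c₁, c₂, the matrix A = c₁ ξ⊗ν + c₂ ζ⊗ν (where v⊗w denotes the (n+1)×n matrix v wᵀ for v ∈ ℝ^{n+1}, w ∈ ℝⁿ) satisfies BᵀA + AᵀB + AᵀA = κ ((1 + c₁)² + c₂² − 1) ν⊗ν, where on the right ν⊗ν = ν νᵀ is n×n. In particular, if (1 + c₁)² + c₂² = 1 + s² then (B + A)ᵀ(B + A) = BᵀB + κ s² ν⊗ν. -/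
open Matrix

lemma mul_vecMulVec_aux {m n : Type*} [Fintype m] [Fintype n] [DecidableEq n]
    (M : Matrix n m ℝ) (v : m → ℝ) (w : n → ℝ) :
    M * vecMulVec v w = vecMulVec (M.mulVec v) w := by
  ext i j
  simp [Matrix.mul_apply, vecMulVec_apply, Matrix.mulVec, dotProduct,
    Finset.sum_mul, mul_assoc]

lemma vecMulVec_tr_mul {m n : Type*} [Fintype m] [Fintype n]
    (v v' : m → ℝ) (w w' : n → ℝ) :
    (vecMulVec v w)ᵀ * vecMulVec v' w' = (v ⬝ᵥ v') • vecMulVec w w' := by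
  ext i j
  simp only [Matrix.mul_apply, transpose_apply, vecMulVec_apply, Matrix.smul_apply,
    smul_eq_mul, dotProduct, Finset.sum_mul]
  exact Finset.sum_congr rfl fun k _ => by ring

/-- **Algebraic corrugation identity.** If `Bᵀξ = κν`, `Bᵀζ = 0`, `|ξ|² = |ζ|² = κ`
and `ξ ⊥ ζ`, then `A = c₁ ξ⊗ν + c₂ ζ⊗ν` satisfies
`BᵀA + AᵀB + AᵀA = κ((1+c₁)² + c₂² − 1) ν⊗ν`; in particular if
`(1+c₁)² + c₂² = 1 + s²` then `(B+A)ᵀ(B+A) = BᵀB + κs² ν⊗ν`. -/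
theorem corrugation_algebra (n : ℕ) (hn : 1 ≤ n)
    (B : Matrix (Fin (n + 1)) (Fin n) ℝ) (ν : Fin n → ℝ) (κ : ℝ) (hκ : 0 < κ)
    (ξ ζ : Fin (n + 1) → ℝ)
    (hξ : Bᵀ.mulVec ξ = κ • ν) (hζ : Bᵀ.mulVec ζ = 0)
    (hξn : ξ ⬝ᵥ ξ = κ) (hζn : ζ ⬝ᵥ ζ = κ) (horth : ξ ⬝ᵥ ζ = 0)
    (c₁ c₂ : ℝ) (A : Matrix (Fin (n + 1)) (Fin n) ℝ)
    (hA : A = c₁ • vecMulVec ξ ν + c₂ • vecMulVec ζ ν) :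
    Bᵀ * A + Aᵀ * B + Aᵀ * A =
      (κ * ((1 + c₁) ^ 2 + c₂ ^ 2 - 1)) • vecMulVec ν ν ∧
    ∀ s : ℝ, (1 + c₁) ^ 2 + c₂ ^ 2 = 1 + s ^ 2 →
      (B + A)ᵀ * (B + A) = Bᵀ * B + (κ * s ^ 2) • vecMulVec ν ν := by
  have hBA : Bᵀ * A = (c₁ * κ) • vecMulVec ν ν := by
    rw [hA, Matrix.mul_add, Matrix.mul_smul, Matrix.mul_smul,
      mul_vecMulVec_aux, mul_vecMulVec_aux, hξ, hζ]
    ext i j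
    simp [vecMulVec_apply, mul_comm, mul_assoc, mul_left_comm]
  have hAB : Aᵀ * B = (c₁ * κ) • vecMulVec ν ν := by
    have : Aᵀ * B = (Bᵀ * A)ᵀ := by simp [Matrix.transpose_mul]
    rw [this, hBA]
    ext i j
    simp [vecMulVec_apply, mul_comm]
  have hAA : Aᵀ * A = (κ * (c₁ ^ 2 + c₂ ^ 2)) • vecMulVec ν ν := by
    rw [hA]
    simp only [transpose_add, transpose_smul, Matrix.add_mul, Matrix.mul_add,
      Matrix.smul_mul, Matrix.mul_smul, vecMulVec_tr_mul, hξn, hζn, horth,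
      dotProduct_comm ζ ξ]
    ext i j
    simp [vecMulVec_apply]
    ring
  have key : Bᵀ * A + Aᵀ * B + Aᵀ * A =
      (κ * ((1 + c₁) ^ 2 + c₂ ^ 2 - 1)) • vecMulVec ν ν := by
    rw [hBA, hAB, hAA]
    ext i j
    simp [vecMulVec_apply]
    ring
  refine ⟨key, fun s hs => ?_⟩
  have hs2 : κ * ((1 + c₁) ^ 2 + c₂ ^ 2 - 1) = κ * s ^ 2 := by rw [hs]; ring
  calc (B + A)ᵀ * (B + A)
      = Bᵀ * B + (Bᵀ * A + Aᵀ * B + Aᵀ * A) := by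
        simp only [transpose_add, Matrix.add_mul, Matrix.mul_add]; abel
    _ = Bᵀ * B + (κ * s ^ 2) • vecMulVec ν ν := by rw [key, hs2]
end
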